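/- Nonamenability of locally finite connected graphs is a quasi-isometry invariant: if G and H are locally finite connected graphs with bounded vertex degrees that are quasi-isometric (as metric spaces with the graph metric) and G is nonamenable, then H is nonamenable. -/

import Mathlib

open SimpleGraph Finset

section AuxNonamenable
variable {V : Type*} {G : SimpleGraph V}



lemma aux_pred (hc : G.Connected) {v w : V} {r : ℕ} (h : G.dist v w = r + 1) :
    ∃ u, G.Adj u w ∧ G.dist v u ≤ r := by
  obtain ⟨p, hp⟩ := (hc v w).exists_walk_length_eq_dist
  have hl : p.reverse.length = r + 1 := by rw [SimpleGraph.Walk.length_reverse, hp, h]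
  rcases hq : p.reverse with _ | ⟨hadj, q⟩
  · rw [hq] at hl; simp at hl
  · refine ⟨_, hadj.symm, ?_⟩
    have h1 : q.length = r := by rw [hq] at hl; simpa using hl
    have h2 := SimpleGraph.dist_le q.reverse
    rwa [SimpleGraph.Walk.length_reverse, h1] at h2

/-- covering finset for balls in a locally finite bounded-degree connected graph -/
lemma aux_cover (hc : G.Connected) (hlf : ∀ v, (G.neighborSet v).Finite) (D : ℕ)
    (hdeg : ∀ v, Nat.card (G.neighborSet v) ≤ D) (v : V) (r : ℕ) :
    ∃ t : Finset V, (∀ w, G.dist v w ≤ r → w ∈ t) ∧ t.card ≤ (D + 1) ^ r := by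
  classical
  induction r with
  | zero =>
    refine ⟨{v}, fun w hw => ?_, by simp⟩
    have : G.dist v w = 0 := Nat.le_zero.mp hw
    have := (hc.dist_eq_zero_iff).mp this
    simp [this]
  | succ r ih =>
    obtain ⟨t, ht, hcard⟩ := ih
    refine ⟨t ∪ t.biUnion (fun u => (hlf u).toFinset), fun w hw => ?_, ?_⟩
    · by_cases hle : G.dist v w ≤ r
      · exact Finset.mem_union_left _ (ht w hle)
      · have heq : G.dist v w = r + 1 := by omega
        obtain ⟨u, hu, hdu⟩ := aux_pred hc heq
        refine Finset.mem_union_right _ (Finset.mem_biUnion.mpr ⟨u, ht u hdu, ?_⟩)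
        rw [Set.Finite.mem_toFinset, SimpleGraph.mem_neighborSet]
        exact hu
    · have hnb : ∀ u : V, ((hlf u).toFinset).card ≤ D := by
        intro u
        rw [← Set.ncard_eq_toFinset_card _ (hlf u), ← Nat.card_coe_set_eq]
        exact hdeg u
      calc (t ∪ t.biUnion (fun u => (hlf u).toFinset)).card
          ≤ t.card + (t.biUnion (fun u => (hlf u).toFinset)).card :=
            Finset.card_union_le _ _
        _ ≤ t.card + ∑ u ∈ t, ((hlf u).toFinset).card :=
            Nat.add_le_add_left (Finset.card_biUnion_le) _
        _ ≤ t.card + t.card * D := by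
            refine Nat.add_le_add_left ?_ _
            calc ∑ u ∈ t, ((hlf u).toFinset).card ≤ ∑ _u ∈ t, D :=
                  Finset.sum_le_sum (fun u _ => hnb u)
              _ = t.card * D := by simp [mul_comm]
        _ = t.card * (D + 1) := by ring
        _ ≤ (D + 1) ^ r * (D + 1) := Nat.mul_le_mul_right _ hcard
        _ = (D + 1) ^ (r + 1) := by ring

/-- the boundary set is finite -/
lemma aux_bdfin (hlf : ∀ v, (G.neighborSet v).Finite) (S : Finset V) :
    {p : V × V | G.Adj p.1 p.2 ∧ p.1 ∈ S ∧ p.2 ∉ S}.Finite := by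
  refine Set.Finite.subset (Set.Finite.biUnion S.finite_toSet
    (fun v _ => (Set.finite_singleton v).prod (hlf v))) ?_
  rintro ⟨a, b⟩ ⟨hadj, haS, hbS⟩
  exact Set.mem_biUnion haS ⟨rfl, hadj⟩

lemma aux_bdcard (hlf : ∀ v, (G.neighborSet v).Finite) (S : Finset V) :
    (Nat.card {p : V × V // G.Adj p.1 p.2 ∧ p.1 ∈ S ∧ p.2 ∉ S} : ℕ)
      = ((aux_bdfin hlf S).toFinset).card := by
  rw [← Set.ncard_eq_toFinset_card _ (aux_bdfin hlf S), ← Nat.card_coe_set_eq]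
  rfl

/-- walks leaving a set cross the boundary -/
lemma aux_walkbd (S : Finset V) : ∀ {s w : V} (p : G.Walk s w), s ∈ S → w ∉ S →
    ∃ x y, G.Adj x y ∧ x ∈ S ∧ y ∉ S ∧ G.dist y w ≤ p.length := by
  intro s w p
  induction p with
  | nil => intro hs hw; exact absurd hs hw
  | @cons a b c h q ih =>
    intro hs hw
    by_cases hu : b ∈ S
    · obtain ⟨x, y, hxy, hxS, hyS, hd⟩ := ih hu hw
      exact ⟨x, y, hxy, hxS, hyS, by simpa using Nat.le_succ_of_le hd⟩
    · exact ⟨a, b, h, hs, hu, by simpa using Nat.le_succ_of_le (SimpleGraph.dist_le q)⟩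

lemma aux_nbcard (hlf : ∀ v, (G.neighborSet v).Finite) (D : ℕ)
    (hdeg : ∀ v, Nat.card (G.neighborSet v) ≤ D) (u : V) :
    ((hlf u).toFinset).card ≤ D := by
  rw [← Set.ncard_eq_toFinset_card _ (hlf u), ← Nat.card_coe_set_eq]
  exact hdeg u

lemma aux_step (hlf : ∀ v, (G.neighborSet v).Finite) (D : ℕ) (hD : 0 < D)
    (hdeg : ∀ v, Nat.card (G.neighborSet v) ≤ D)
    (ε : ℝ) (hε : 0 < ε)
    (hiso : ∀ V₀ : Finset V, V₀.Nonempty → ε * V₀.card ≤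
      (Nat.card {p : V × V // G.Adj p.1 p.2 ∧ p.1 ∈ V₀ ∧ p.2 ∉ V₀} : ℝ))
    (T : Finset V) (hT : T.Nonempty) :
    ∃ T' : Finset V, (∀ v ∈ T', v ∈ T ∨ ∃ u ∈ T, G.Adj u v) ∧
      (1 + ε / D) * (T.card : ℝ) ≤ (T'.card : ℝ) := by
  classical
  set BdF := (aux_bdfin hlf T).toFinset with hBdF
  have hmem : ∀ p : V × V, p ∈ BdF ↔ G.Adj p.1 p.2 ∧ p.1 ∈ T ∧ p.2 ∉ T := by
    intro p
    rw [hBdF, Set.Finite.mem_toFinset]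
    rfl
  have hbd : ε * (T.card : ℝ) ≤ (BdF.card : ℝ) := by
    have := hiso T hT
    rwa [aux_bdcard hlf T] at this
  set outer := BdF.image Prod.snd with houter
  have hfib : BdF.card ≤ D * outer.card := by
    apply Finset.card_le_mul_card_image
    intro b _
    have hsub : {p ∈ BdF | p.2 = b} ⊆ ((hlf b).toFinset).image (fun u => (u, b)) := by
      intro p hp
      rw [Finset.mem_filter] at hp
      obtain ⟨hp1, hp2⟩ := hp
      rw [hmem] at hp1
      refine Finset.mem_image.mpr ⟨p.1, ?_, ?_⟩
      · rw [Set.Finite.mem_toFinset, SimpleGraph.mem_neighborSet]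
        exact (hp2 ▸ hp1.1).symm
      · rw [← hp2]
    calc {p ∈ BdF | p.2 = b}.card ≤ (((hlf b).toFinset).image (fun u => (u, b))).card :=
          Finset.card_le_card hsub
      _ ≤ ((hlf b).toFinset).card := Finset.card_image_le
      _ ≤ D := aux_nbcard hlf D hdeg b
  have hdisj : Disjoint T outer := by
    rw [Finset.disjoint_right]
    intro a ha
    rw [houter, Finset.mem_image] at ha
    obtain ⟨p, hp, hpa⟩ := ha
    rw [hmem] at hp
    exact hpa ▸ hp.2.2
  refine ⟨T ∪ outer, ?_, ?_⟩
  · intro v hv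
    rcases Finset.mem_union.mp hv with h | h
    · exact Or.inl h
    · rw [houter, Finset.mem_image] at h
      obtain ⟨p, hp, hpv⟩ := h
      rw [hmem] at hp
      exact Or.inr ⟨p.1, hp.2.1, hpv ▸ hp.1⟩
  · have hcard : ((T ∪ outer).card : ℝ) = (T.card : ℝ) + (outer.card : ℝ) := by
      rw [Finset.card_union_of_disjoint hdisj]; push_cast; ring
    have hDpos : (0 : ℝ) < D := by exact_mod_cast hD
    have houtlb : (ε / D) * (T.card : ℝ) ≤ (outer.card : ℝ) := by
      rw [div_mul_eq_mul_div, div_le_iff₀ hDpos]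
      calc ε * (T.card : ℝ) ≤ (BdF.card : ℝ) := hbd
        _ ≤ (D : ℝ) * (outer.card : ℝ) := by exact_mod_cast hfib
        _ = (outer.card : ℝ) * D := by ring
    rw [hcard]
    nlinarith [Nat.cast_nonneg (α := ℝ) T.card]

lemma aux_growth (hc : G.Connected) (hlf : ∀ v, (G.neighborSet v).Finite) (D : ℕ) (hD : 0 < D)
    (hdeg : ∀ v, Nat.card (G.neighborSet v) ≤ D)
    (ε : ℝ) (hε : 0 < ε)
    (hiso : ∀ V₀ : Finset V, V₀.Nonempty → ε * V₀.card ≤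
      (Nat.card {p : V × V // G.Adj p.1 p.2 ∧ p.1 ∈ V₀ ∧ p.2 ∉ V₀} : ℝ))
    (n : ℕ) (T : Finset V) (hT : T.Nonempty) :
    ∃ T' : Finset V, (∀ v ∈ T', ∃ t ∈ T, G.dist t v ≤ n) ∧
      (1 + ε / D) ^ n * (T.card : ℝ) ≤ (T'.card : ℝ) := by
  have hδ : (0 : ℝ) < 1 + ε / D := by positivity
  induction n with
  | zero =>
    refine ⟨T, fun v hv => ⟨v, hv, by simp⟩, by simp⟩
  | succ n ih =>
    obtain ⟨T₁, hT₁mem, hT₁card⟩ := ih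
    have hT₁ne : T₁.Nonempty := by
      rw [← Finset.card_pos]
      by_contra hcon
      have : T₁.card = 0 := by omega
      rw [this] at hT₁card
      have hTpos : (0 : ℝ) < (T.card : ℝ) := by
        exact_mod_cast Finset.card_pos.mpr hT
      nlinarith [pow_pos hδ n]
    obtain ⟨T₂, hT₂mem, hT₂card⟩ := aux_step hlf D hD hdeg ε hε hiso T₁ hT₁ne
    refine ⟨T₂, ?_, ?_⟩
    · intro v hv
      rcases hT₂mem v hv with h | ⟨u, hu, hadj⟩
      · obtain ⟨t, ht, hd⟩ := hT₁mem v h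
        exact ⟨t, ht, Nat.le_succ_of_le hd⟩
      · obtain ⟨t, ht, hd⟩ := hT₁mem u hu
        refine ⟨t, ht, ?_⟩
        calc G.dist t v ≤ G.dist t u + G.dist u v := hc.dist_triangle
          _ ≤ n + 1 := by
            have : G.dist u v = 1 := SimpleGraph.dist_eq_one_iff_adj.mpr hadj
            omega
    · calc (1 + ε / D) ^ (n + 1) * (T.card : ℝ)
          = (1 + ε / D) * ((1 + ε / D) ^ n * (T.card : ℝ)) := by ring
        _ ≤ (1 + ε / D) * (T₁.card : ℝ) := by
            exact mul_le_mul_of_nonneg_left hT₁card hδ.le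
        _ ≤ (T₂.card : ℝ) := hT₂card

end AuxNonamenable

/-- A locally finite graph is nonamenable if for some ε > 0 every finite non-empty
set of vertices `V₀` satisfies `ε * |V₀| ≤ |∂V₀|`, where the edge boundary is counted
via ordered pairs (inside vertex, outside neighbour). -/
def GraphNonamenable {V : Type*} (G : SimpleGraph V) : Prop :=
  ∃ ε : ℝ, 0 < ε ∧ ∀ V₀ : Finset V, V₀.Nonempty →
    ε * (V₀.card : ℝ) ≤
      (Nat.card {p : V × V // G.Adj p.1 p.2 ∧ p.1 ∈ V₀ ∧ p.2 ∉ V₀} : ℝ)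

/-- nonamenability is invariant under quasi-isometry of locally finite
connected graphs with bounded degree (with the graph metric). -/
theorem stmt7 {V W : Type*} (G : SimpleGraph V) (H : SimpleGraph W)
    (hGconn : G.Connected) (hHconn : H.Connected)
    (hGlf : ∀ v : V, (G.neighborSet v).Finite) (hHlf : ∀ w : W, (H.neighborSet w).Finite)
    (DG DH : ℕ)
    (hGdeg : ∀ v : V, Nat.card (G.neighborSet v) ≤ DG)
    (hHdeg : ∀ w : W, Nat.card (H.neighborSet w) ≤ DH)
    (f : V → W) (A B : ℝ) (hA : 1 ≤ A) (hB : 0 ≤ B)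
    (hqi_lower : ∀ x y : V, (1 / A) * (G.dist x y : ℝ) - B ≤ (H.dist (f x) (f y) : ℝ))
    (hqi_upper : ∀ x y : V, (H.dist (f x) (f y) : ℝ) ≤ A * (G.dist x y : ℝ) + B)
    (hqi_dense : ∀ w : W, ∃ x : V, (H.dist (f x) w : ℝ) ≤ B)
    (hG : GraphNonamenable G) :
    GraphNonamenable H := by
  classical
  obtain ⟨ε, hε, hiso⟩ := hG
  obtain ⟨v0⟩ : Nonempty V := hGconn.nonempty
  have hApos : (0 : ℝ) < A := lt_of_lt_of_le one_pos hA
  -- DG is positive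
  have hDG : 0 < DG := by
    have h1 := hiso {v0} (Finset.singleton_nonempty v0)
    have hpos : 0 < Nat.card {p : V × V // G.Adj p.1 p.2 ∧
        p.1 ∈ ({v0} : Finset V) ∧ p.2 ∉ ({v0} : Finset V)} := by
      by_contra hcon
      push_neg at hcon
      have h0 : Nat.card {p : V × V // G.Adj p.1 p.2 ∧
          p.1 ∈ ({v0} : Finset V) ∧ p.2 ∉ ({v0} : Finset V)} = 0 := by omega
      rw [h0] at h1
      simp at h1
      linarith
    obtain ⟨⟨p, hp⟩⟩ := (Nat.card_pos_iff.mp hpos).1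
    have hmem : p.2 ∈ G.neighborSet v0 := by
      have : p.1 = v0 := Finset.mem_singleton.mp hp.2.1
      exact this ▸ hp.1
    haveI : Finite (G.neighborSet v0) := (hGlf v0).to_subtype
    haveI : Nonempty (G.neighborSet v0) := ⟨⟨p.2, hmem⟩⟩
    have := Nat.card_pos (α := (G.neighborSet v0))
    have := hGdeg v0
    omega
  have hDGpos : (0 : ℝ) < (DG : ℝ) := by exact_mod_cast hDG
  set δ : ℝ := ε / DG with hδdef
  have hδ : 0 < δ := div_pos hε hDGpos
  set rg : ℕ := ⌈2 * B⌉₊ with hrg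
  set rf : ℕ := ⌈A * B⌉₊ with hrf
  set K : ℕ := (DH + 1) ^ rg with hK
  set L : ℕ := (DG + 1) ^ rf with hL
  have hKpos : (0:ℝ) < (K:ℝ) := by positivity
  have hLpos : (0:ℝ) < (L:ℝ) := by positivity
  obtain ⟨n, hn⟩ := pow_unbounded_of_one_lt (y := 1 + δ) (2 * ((K:ℝ) * L)) (by linarith)
  set R : ℕ := ⌈A * n + 2 * B⌉₊ with hR
  set M : ℕ := (DH + 1) ^ R with hM
  have hMpos : (0:ℝ) < (M:ℝ) := by positivity
  refine ⟨1 / M, by positivity, ?_⟩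
  intro S hS
  -- quasi-inverse g
  set g : W → V := fun w => Classical.choose (hqi_dense w) with hgdef
  have hg : ∀ w, (H.dist (f (g w)) w : ℝ) ≤ B := fun w => Classical.choose_spec (hqi_dense w)
  set T := S.image g with hTdef
  have hTne : T.Nonempty := hS.image g
  have hTpos : (0:ℝ) < (T.card : ℝ) := by exact_mod_cast Finset.card_pos.mpr hTne
  -- S.card ≤ K * T.card
  have hST : S.card ≤ K * T.card := by
    apply Finset.card_le_mul_card_image
    intro b hb
    obtain ⟨a, ha, hab⟩ := Finset.mem_image.mp hb
    obtain ⟨t, htcov, htcard⟩ := aux_cover hHconn hHlf DH hHdeg a rg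
    refine le_trans (Finset.card_le_card ?_) htcard
    intro w hw
    rw [Finset.mem_filter] at hw
    obtain ⟨hwS, hwb⟩ := hw
    apply htcov
    have htri : H.dist a w ≤ H.dist a (f (g a)) + H.dist (f (g a)) w := hHconn.dist_triangle
    have h1 : (H.dist a (f (g a)) : ℝ) ≤ B := by
      rw [SimpleGraph.dist_comm]; exact hg a
    have h2 : (H.dist (f (g a)) w : ℝ) ≤ B := by
      have : g a = g w := by rw [hab, hwb]
      rw [this]; exact hg w
    have hreal : (H.dist a w : ℝ) ≤ 2 * B := by
      have : (H.dist a w : ℝ) ≤ (H.dist a (f (g a)) : ℝ) + (H.dist (f (g a)) w : ℝ) := by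
        exact_mod_cast htri
      linarith
    have : (H.dist a w : ℝ) ≤ (rg : ℝ) := le_trans hreal (Nat.le_ceil _)
    exact_mod_cast this
  -- growth in G
  obtain ⟨T', hT'mem, hT'card⟩ := aux_growth hGconn hGlf DG hDG hGdeg ε hε hiso n T hTne
  set U := T'.image f with hUdef
  -- T'.card ≤ L * U.card
  have hT'U : T'.card ≤ L * U.card := by
    apply Finset.card_le_mul_card_image
    intro b hb
    obtain ⟨a, ha, hab⟩ := Finset.mem_image.mp hb
    obtain ⟨t, htcov, htcard⟩ := aux_cover hGconn hGlf DG hGdeg a rf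
    refine le_trans (Finset.card_le_card ?_) htcard
    intro w hw
    rw [Finset.mem_filter] at hw
    obtain ⟨hwT, hwb⟩ := hw
    apply htcov
    have hfeq : f a = f w := by rw [hab, hwb]
    have h0 : (H.dist (f a) (f w) : ℝ) = 0 := by rw [hfeq]; simp
    have hlow := hqi_lower a w
    rw [h0] at hlow
    have : (G.dist a w : ℝ) ≤ A * B := by
      rw [div_mul_eq_mul_div, one_mul] at hlow
      have h3 : (G.dist a w : ℝ) / A ≤ B := by linarith
      calc (G.dist a w : ℝ) = ((G.dist a w : ℝ) / A) * A := by field_simp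
        _ ≤ B * A := mul_le_mul_of_nonneg_right h3 hApos.le
        _ = A * B := mul_comm _ _
    have : (G.dist a w : ℝ) ≤ (rf : ℝ) := le_trans this (Nat.le_ceil _)
    exact_mod_cast this
  -- the ball of radius R around S in H
  set Ball : Set W := {w' | ∃ s ∈ S, H.dist s w' ≤ R} with hBall
  have hBallfin : Ball.Finite := by
    have hcov : ∀ s : W, ∃ t : Finset W, (∀ w, H.dist s w ≤ R → w ∈ t) ∧
        t.card ≤ (DH + 1) ^ R := fun s => aux_cover hHconn hHlf DH hHdeg s R
    choose c hc _ using hcov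
    refine Set.Finite.subset (Set.Finite.biUnion S.finite_toSet
      (fun s _ => (c s).finite_toSet)) ?_
    rintro w' ⟨s, hsS, hsd⟩
    exact Set.mem_biUnion hsS (hc s w' hsd)
  set BF : Finset W := hBallfin.toFinset with hBF
  have hBFmem : ∀ w', w' ∈ BF ↔ ∃ s ∈ S, H.dist s w' ≤ R := by
    intro w'; rw [hBF, Set.Finite.mem_toFinset]; rfl
  have hSBF : S ⊆ BF := by
    intro s hs
    rw [hBFmem]
    exact ⟨s, hs, by rw [SimpleGraph.dist_self]; exact Nat.zero_le _⟩
  have hUBF : U ⊆ BF := by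
    intro w' hw'
    obtain ⟨v, hv, hfv⟩ := Finset.mem_image.mp hw'
    obtain ⟨t, htT, hdtv⟩ := hT'mem v hv
    obtain ⟨s, hsS, hgst⟩ := Finset.mem_image.mp htT
    rw [hBFmem]
    refine ⟨s, hsS, ?_⟩
    have htri : H.dist s w' ≤ H.dist s (f t) + H.dist (f t) w' := hHconn.dist_triangle
    have h1 : (H.dist s (f t) : ℝ) ≤ B := by
      rw [SimpleGraph.dist_comm, hgst.symm]
      exact hg s
    have h2 : (H.dist (f t) w' : ℝ) ≤ A * n + B := by
      rw [← hfv]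
      refine le_trans (hqi_upper t v) ?_
      have : (G.dist t v : ℝ) ≤ (n : ℝ) := by exact_mod_cast hdtv
      nlinarith
    have hreal : (H.dist s w' : ℝ) ≤ A * n + 2 * B := by
      have hcast : (H.dist s w' : ℝ) ≤ (H.dist s (f t) : ℝ) + (H.dist (f t) w' : ℝ) := by
        exact_mod_cast htri
      linarith
    have : (H.dist s w' : ℝ) ≤ (R : ℝ) := le_trans hreal (Nat.le_ceil _)
    exact_mod_cast this
  -- cardinality: BF is big
  have hbig : 2 * S.card ≤ BF.card := by
    have hc1 : (S.card : ℝ) ≤ (K : ℝ) * T.card := by exact_mod_cast hST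
    have hc3 : (T'.card : ℝ) ≤ (L : ℝ) * U.card := by exact_mod_cast hT'U
    have hc4 : (U.card : ℝ) ≤ (BF.card : ℝ) := by
      exact_mod_cast Finset.card_le_card hUBF
    have h5 : (2 * ((K:ℝ) * L)) * T.card ≤ (1 + δ) ^ n * T.card :=
      mul_le_mul_of_nonneg_right hn.le (Nat.cast_nonneg _)
    have h6 : (2 * ((K:ℝ) * L)) * T.card ≤ (L : ℝ) * U.card := by
      calc (2 * ((K:ℝ) * L)) * T.card ≤ (1 + δ) ^ n * T.card := h5
        _ ≤ (T'.card : ℝ) := hT'card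
        _ ≤ (L : ℝ) * U.card := hc3
    have h7 : 2 * ((K:ℝ) * T.card) ≤ (U.card : ℝ) := by
      rw [← mul_le_mul_iff_right₀ hLpos]
      nlinarith
    have : 2 * (S.card : ℝ) ≤ (BF.card : ℝ) := by nlinarith
    exact_mod_cast this
  set SD : Finset W := BF \ S with hSD
  have hSDcard : S.card ≤ SD.card := by
    rw [hSD, Finset.card_sdiff_of_subset hSBF]
    omega
  -- boundary map
  set P : W → Prop := fun w' => ∃ q : W × W, H.Adj q.1 q.2 ∧ q.1 ∈ S ∧ q.2 ∉ S ∧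
    H.dist q.2 w' ≤ R with hPdef
  set φ : W → W × W := fun w' => if h : P w' then h.choose else (w', w') with hφdef
  have hP : ∀ w' ∈ SD, P w' := by
    intro w' hw'
    rw [hSD, Finset.mem_sdiff] at hw'
    obtain ⟨hwBF, hwS⟩ := hw'
    obtain ⟨s, hsS, hsd⟩ := (hBFmem w').mp hwBF
    obtain ⟨p, hp⟩ := (hHconn s w').exists_walk_length_eq_dist
    obtain ⟨x, y, hxy, hxS, hyS, hd⟩ := aux_walkbd S p hsS hwS
    exact ⟨(x, y), hxy, hxS, hyS, le_trans hd (by omega)⟩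
  have hφspec : ∀ w' ∈ SD, H.Adj (φ w').1 (φ w').2 ∧ (φ w').1 ∈ S ∧ (φ w').2 ∉ S ∧
      H.dist (φ w').2 w' ≤ R := by
    intro w' hw'
    have h := hP w' hw'
    have heq : φ w' = h.choose := dif_pos h
    rw [heq]
    exact h.choose_spec
  set BdFH : Finset (W × W) := (aux_bdfin hHlf S).toFinset with hBdFH
  have himg : SD.image φ ⊆ BdFH := by
    intro q hq
    obtain ⟨w', hw', hφw⟩ := Finset.mem_image.mp hq
    obtain ⟨h1, h2, h3, _⟩ := hφspec w' hw'
    rw [hBdFH, Set.Finite.mem_toFinset]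
    exact hφw ▸ ⟨h1, h2, h3⟩
  have hfibφ : SD.card ≤ M * (SD.image φ).card := by
    apply Finset.card_le_mul_card_image
    intro b hb
    obtain ⟨t, htcov, htcard⟩ := aux_cover hHconn hHlf DH hHdeg b.2 R
    refine le_trans (Finset.card_le_card ?_) htcard
    intro w' hw'
    rw [Finset.mem_filter] at hw'
    obtain ⟨hwSD, hwb⟩ := hw'
    obtain ⟨_, _, _, hd⟩ := hφspec w' hwSD
    exact htcov w' (hwb ▸ hd)
  -- conclude
  rw [aux_bdcard hHlf S]
  have hfinal : (S.card : ℝ) ≤ (M : ℝ) * (BdFH.card : ℝ) := by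
    have : S.card ≤ M * BdFH.card :=
      le_trans hSDcard (le_trans hfibφ
        (Nat.mul_le_mul_left M (Finset.card_le_card himg)))
    exact_mod_cast this
  rw [div_mul_eq_mul_div, one_mul, div_le_iff₀ hMpos]
  rw [mul_comm]
  exact hfinal
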